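/- The cycle index theorem: for a sequence (a_m) of complex numbers, the formal power series identity Σ_{n≥0} (t^n/n!) Σ_{σ ∈ S_n} Π_{m=1}^n a_m^{C_m(σ)} = exp(Σ_{m≥1} (a_m/m) t^m) holds, where C_m(σ) is the number of cycles of length m of σ. -/

import Mathlib

open Nat Finset Equiv PowerSeries

/-- Full cycle type: cycle type together with fixed points as 1-cycles. -/
noncomputable def fullCycleType {n : ℕ} (σ : Equiv.Perm (Fin n)) : Multiset ℕ :=
  σ.cycleType + Multiset.replicate (n - σ.cycleType.sum) 1

/-- `C_m(σ)`: the number of cycles of length `m` of `σ` (fixed points count as 1-cycles). -/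
noncomputable def cycleCount {n : ℕ} (σ : Equiv.Perm (Fin n)) (m : ℕ) : ℕ :=
  (fullCycleType σ).count m

section Aux

set_option linter.unusedSectionVars false

/-! ### Power series side -/

noncomputable def gA (a : ℕ → ℂ) : PowerSeries ℂ :=
  PowerSeries.mk fun m => if m = 0 then 0 else a m / m

noncomputable def cA (a : ℕ → ℂ) (n : ℕ) : ℂ :=
  PowerSeries.coeff (R := ℂ) n (∑ k ∈ Finset.range (n+1), ((k ! : ℂ))⁻¹ • gA a ^ k)

noncomputable def wtA (a : ℕ → ℂ) (μ : Multiset ℕ) : ℂ := (μ.map a).prod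

noncomputable def SA (a : ℕ → ℂ) (n : ℕ) : ℂ :=
  ∑ σ : Equiv.Perm (Fin n), wtA a (fullCycleType σ)



lemma coeff_gA_pow_eq_zero (a : ℕ → ℂ) {j k : ℕ} (h : j < k) :
    PowerSeries.coeff (R := ℂ) j (gA a ^ k) = 0 := by
  induction k generalizing j with
  | zero => omega
  | succ k ih =>
    rw [pow_succ, PowerSeries.coeff_mul]
    refine Finset.sum_eq_zero fun p hp => ?_
    rw [Finset.HasAntidiagonal.mem_antidiagonal] at hp
    rcases Nat.lt_or_ge p.1 k with h1 | h1
    · rw [ih h1, zero_mul]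
    · have : p.2 = 0 := by omega
      rw [this]
      simp [gA, PowerSeries.coeff_mk]

lemma cA_eq (a : ℕ → ℂ) {n M : ℕ} (h : n < M) :
    cA a n = PowerSeries.coeff (R := ℂ) n (∑ k ∈ Finset.range M, ((k ! : ℂ))⁻¹ • gA a ^ k) := by
  rw [cA, map_sum, map_sum]
  refine Finset.sum_subset (by intro x hx; simp only [Finset.mem_range] at *; omega) ?_
  intro k hk hk'
  simp only [Finset.mem_range, not_lt] at hk'
  rw [map_smul, coeff_gA_pow_eq_zero a (by omega), smul_zero]

lemma derivative_gA (a : ℕ → ℂ) :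
    d⁄dX ℂ (gA a) = PowerSeries.mk fun i => a (i + 1) := by
  ext j
  rw [PowerSeries.coeff_derivative, PowerSeries.coeff_mk, gA, PowerSeries.coeff_mk]
  simp only [Nat.succ_ne_zero, if_false]
  push_cast
  rw [div_mul_cancel₀]
  exact Nat.cast_add_one_ne_zero j

lemma cA_zero (a : ℕ → ℂ) : cA a 0 = 1 := by
  simp [cA]

lemma cA_rec (a : ℕ → ℂ) (n : ℕ) :
    ((n + 1 : ℕ) : ℂ) * cA a (n + 1) = ∑ m ∈ Finset.Icc 1 (n + 1), a m * cA a (n + 1 - m) := by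
  have hca : cA a (n+1) = PowerSeries.coeff (R := ℂ) (n+1)
      (∑ k ∈ Finset.range (n+2), ((k ! : ℂ))⁻¹ • gA a ^ k) := cA_eq a (by omega)
  rw [hca, map_sum, Finset.mul_sum]
  have term : ∀ k, ((n+1:ℕ):ℂ) * PowerSeries.coeff (R := ℂ) (n+1) (((k ! : ℂ))⁻¹ • gA a ^ k)
      = ((k ! : ℂ))⁻¹ * (k * ∑ p ∈ Finset.HasAntidiagonal.antidiagonal n,
          PowerSeries.coeff (R := ℂ) p.1 (gA a ^ (k-1)) * a (p.2+1)) := by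
    intro k
    rw [map_smul, smul_eq_mul]
    have hd : ((n+1:ℕ):ℂ) * PowerSeries.coeff (R := ℂ) (n+1) (gA a ^ k)
        = PowerSeries.coeff (R := ℂ) n (d⁄dX ℂ (gA a ^ k)) := by
      rw [PowerSeries.coeff_derivative]; push_cast; ring
    rw [mul_left_comm]
    congr 1
    rw [hd, Derivation.leibniz_pow, map_nsmul, nsmul_eq_mul]
    congr 1
    rw [smul_eq_mul, PowerSeries.coeff_mul]
    refine Finset.sum_congr rfl fun p hp => ?_
    rw [derivative_gA, PowerSeries.coeff_mk]
  calc ∑ k ∈ Finset.range (n+2), ((n+1:ℕ):ℂ) * PowerSeries.coeff (R := ℂ) (n+1) (((k ! : ℂ))⁻¹ • gA a ^ k)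
      = ∑ k ∈ Finset.range (n+2), ((k ! : ℂ))⁻¹ * (k * ∑ p ∈ Finset.HasAntidiagonal.antidiagonal n,
          PowerSeries.coeff (R := ℂ) p.1 (gA a ^ (k-1)) * a (p.2+1)) :=
        Finset.sum_congr rfl fun k _ => term k
    _ = ∑ j ∈ Finset.range (n+1), ((j ! : ℂ))⁻¹ * (∑ p ∈ Finset.HasAntidiagonal.antidiagonal n,
          PowerSeries.coeff (R := ℂ) p.1 (gA a ^ j) * a (p.2+1)) := by
        rw [Finset.sum_range_succ']
        simp only [Nat.cast_zero, zero_mul, mul_zero, add_zero, Nat.add_sub_cancel]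
        refine Finset.sum_congr rfl fun j _ => ?_
        rw [Nat.factorial_succ]
        push_cast
        field_simp
    _ = ∑ p ∈ Finset.HasAntidiagonal.antidiagonal n, (∑ j ∈ Finset.range (n+1),
          ((j ! : ℂ))⁻¹ * PowerSeries.coeff (R := ℂ) p.1 (gA a ^ j)) * a (p.2+1) := by
        simp_rw [Finset.mul_sum, Finset.sum_mul, mul_assoc]
        rw [Finset.sum_comm]
    _ = ∑ p ∈ Finset.HasAntidiagonal.antidiagonal n, cA a p.1 * a (p.2+1) := by
        refine Finset.sum_congr rfl fun p hp => ?_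
        rw [Finset.HasAntidiagonal.mem_antidiagonal] at hp
        have : cA a p.1 = PowerSeries.coeff (R := ℂ) p.1
            (∑ k ∈ Finset.range (n+1), ((k ! : ℂ))⁻¹ • gA a ^ k) := cA_eq a (by omega)
        rw [this, map_sum]
        refine congrArg (· * a (p.2+1)) (Finset.sum_congr rfl fun k _ => ?_)
        rw [map_smul, smul_eq_mul]
    _ = ∑ i ∈ Finset.range (n+1), cA a i * a (n - i + 1) := by
        rw [Nat.sum_antidiagonal_eq_sum_range_succ (f := fun i j => cA a i * a (j+1))]
    _ = ∑ m ∈ Finset.Icc 1 (n + 1), a m * cA a (n + 1 - m) := by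
        refine Finset.sum_nbij' (fun i => n + 1 - i) (fun m => n + 1 - m) ?_ ?_ ?_ ?_ ?_
        · intro i hi; simp only [Finset.mem_range] at hi; simp only [Finset.mem_Icc]; omega
        · intro m hm; simp only [Finset.mem_Icc] at hm; simp only [Finset.mem_range]; omega
        · intro i hi; simp only [Finset.mem_range] at hi; omega
        · intro m hm; simp only [Finset.mem_Icc] at hm; omega
        · intro i hi; simp only [Finset.mem_range] at hi
          have h1 : n + 1 - i = n - i + 1 := by omega
          have h2 : n + 1 - (n + 1 - i) = i := by omega
          rw [h2, h1, mul_comm]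


lemma cycleType_sum_le {n : ℕ} (σ : Equiv.Perm (Fin n)) : σ.cycleType.sum ≤ n := by
  rw [Equiv.Perm.sum_cycleType]
  simpa using Finset.card_le_univ σ.support

lemma fullCycleType_sum {n : ℕ} (σ : Equiv.Perm (Fin n)) : (fullCycleType σ).sum = n := by
  rw [fullCycleType, Multiset.sum_add, Multiset.sum_replicate, smul_eq_mul, mul_one]
  have := cycleType_sum_le σ
  omega

lemma one_le_of_mem_fullCycleType {n : ℕ} {σ : Equiv.Perm (Fin n)} {x : ℕ}
    (hx : x ∈ fullCycleType σ) : 1 ≤ x := by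
  rw [fullCycleType, Multiset.mem_add] at hx
  rcases hx with h | h
  · exact le_of_lt (Equiv.Perm.one_lt_of_mem_cycleType h)
  · rw [Multiset.eq_of_mem_replicate h]

lemma mem_fullCycleType_mem_Icc {n : ℕ} {σ : Equiv.Perm (Fin n)} {x : ℕ}
    (hx : x ∈ fullCycleType σ) : x ∈ Finset.Icc 1 n := by
  rw [Finset.mem_Icc]
  refine ⟨one_le_of_mem_fullCycleType hx, ?_⟩
  calc x ≤ (fullCycleType σ).sum := Multiset.le_sum_of_mem hx
    _ = n := fullCycleType_sum σ

lemma prod_eq_wtA (a : ℕ → ℂ) {n : ℕ} (σ : Equiv.Perm (Fin n)) :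
    ∏ m ∈ Finset.Icc 1 n, a m ^ cycleCount σ m = wtA a (fullCycleType σ) := by
  rw [wtA, Finset.prod_multiset_map_count]
  refine (Finset.prod_subset ?_ ?_).symm
  · intro x hx
    exact mem_fullCycleType_mem_Icc (Multiset.mem_toFinset.mp hx)
  · intro x _ hx
    rw [cycleCount, Multiset.count_eq_zero_of_notMem (fun h => hx (Multiset.mem_toFinset.mpr h)),
      pow_zero]

lemma SA_def' (a : ℕ → ℂ) (n : ℕ) :
    SA a n = ∑ σ : Equiv.Perm (Fin n), ∏ m ∈ Finset.Icc 1 n, a m ^ cycleCount σ m := by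
  refine Finset.sum_congr rfl fun σ _ => (prod_eq_wtA a σ).symm

lemma SA_zero (a : ℕ → ℂ) : SA a 0 = 1 := by
  simp [SA, wtA, fullCycleType]

variable {α : Type*} [Fintype α] [DecidableEq α] {β : Type*} [DecidableEq β] [Fintype β]



lemma card_pointed_equiv (m : ℕ) (h : Fintype.card β = m + 1) (b : β) :
    Fintype.card {f : Fin (m+1) ≃ β // f 0 = b} = m ! := by
  have e0 : ∀ b1 b2 : β, {f : Fin (m+1) ≃ β // f 0 = b1} ≃ {f : Fin (m+1) ≃ β // f 0 = b2} :=
    fun b1 b2 =>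
    { toFun := fun f => ⟨f.1.trans (Equiv.swap b1 b2),
        by rw [Equiv.trans_apply, f.2, Equiv.swap_apply_left]⟩
      invFun := fun f => ⟨f.1.trans (Equiv.swap b1 b2),
        by rw [Equiv.trans_apply, f.2, Equiv.swap_apply_right]⟩
      left_inv := fun f => Subtype.ext (by ext x; simp)
      right_inv := fun f => Subtype.ext (by ext x; simp) }
  have key : Fintype.card (Fin (m+1) ≃ β)
      = Fintype.card β * Fintype.card {f : Fin (m+1) ≃ β // f 0 = b} := by
    rw [← Fintype.card_congr (Equiv.sigmaFiberEquiv (fun f : Fin (m+1) ≃ β => f 0)),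
      Fintype.card_sigma,
      Finset.sum_congr rfl (fun b' _ => Fintype.card_congr (e0 b' b)),
      Finset.sum_const, Finset.card_univ, smul_eq_mul]
  have hcard : Fintype.card (Fin (m+1) ≃ β) = (m+1)! := by
    rw [Fintype.card_equiv (Fintype.equivFinOfCardEq h).symm, Fintype.card_fin]
  rw [hcard, h, Nat.factorial_succ] at key
  exact (Nat.eq_of_mul_eq_mul_left (Nat.succ_pos m) key.symm)

lemma permCongr_pow {α β : Type*} (e : α ≃ β) (p : Equiv.Perm α) (i : ℕ) :
    (e.permCongr p) ^ i = e.permCongr (p ^ i) := by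
  induction i with
  | zero => ext x; simp
  | succ i ih =>
    rw [pow_succ, pow_succ, ih]
    ext x
    simp [Equiv.permCongr_apply, Equiv.Perm.mul_apply]

open Fin.NatCast in
lemma finRotate_pow_zero (m : ℕ) (i : ℕ) :
    ((finRotate (m+1)) ^ i) 0 = (i : Fin (m+1)) := by
  induction i with
  | zero => simp
  | succ i ih =>
    rw [_root_.pow_succ', Equiv.Perm.mul_apply, ih, finRotate_succ_apply]
    push_cast
    ring

open Fin.NatCast in
lemma card_fullorbit (m : ℕ) (h : Fintype.card β = m + 1) (b : β) :
    Fintype.card {c : Equiv.Perm β // ∀ y, c.SameCycle b y} = m ! := by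
  rw [← card_pointed_equiv m h b]
  have hψval : ∀ (f : Fin (m+1) ≃ β) (i : ℕ), ((f.permCongr (finRotate (m+1))) ^ i) (f 0)
      = f ((i : Fin (m+1))) := by
    intro f i
    rw [permCongr_pow, Equiv.permCongr_apply, Equiv.symm_apply_apply, finRotate_pow_zero]
  have ψmem : ∀ f : {f : Fin (m+1) ≃ β // f 0 = b},
      ∀ y, (Equiv.permCongr f.1 (finRotate (m+1))).SameCycle b y := by
    rintro ⟨f, hf⟩ y
    refine ⟨((f.symm y).val : ℤ), ?_⟩
    show ((f.permCongr (finRotate (m+1))) ^ (((f.symm y).val : ℤ))) b = y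
    rw [zpow_natCast, ← hf, hψval, Fin.cast_val_eq_self, Equiv.apply_symm_apply]
  set Ψ : {f : Fin (m+1) ≃ β // f 0 = b} → {c : Equiv.Perm β // ∀ y, c.SameCycle b y} :=
    fun f => ⟨Equiv.permCongr f.1 (finRotate (m+1)), ψmem f⟩ with hΨ
  have hinj : Function.Injective Ψ := by
    rintro ⟨f, hf⟩ ⟨f', hf'⟩ hff
    have : ∀ i : Fin (m+1), f i = f' i := by
      intro i
      have h1 := hψval f i.val
      have h2 := hψval f' i.val
      rw [Fin.cast_val_eq_self] at h1 h2
      have heq : Equiv.permCongr f (finRotate (m+1)) = Equiv.permCongr f' (finRotate (m+1)) :=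
        congrArg (Subtype.val) hff
      rw [← h1, ← h2, hf, hf', heq]
    exact Subtype.ext (Equiv.ext this)
  have hsurj : Function.Surjective Ψ := by
    rintro ⟨c, hc⟩
    -- auxiliary facts
    have hc1 : m = 0 → c = 1 := by
      intro hm
      subst hm
      have : Subsingleton β := Fintype.card_le_one_iff_subsingleton.mp (by omega)
      exact Equiv.ext fun x => Subsingleton.elim _ _
    have hcyc : 1 ≤ m → c.IsCycle ∧ c.support = Finset.univ := by
      intro hm
      have hb : c b ≠ b := by
        intro hfix
        obtain ⟨y, hy⟩ := Fintype.exists_ne_of_one_lt_card (by omega) b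
        obtain ⟨i, hi⟩ := hc y
        rw [Equiv.Perm.zpow_apply_eq_self_of_apply_eq_self hfix] at hi
        exact hy hi.symm
      have hmove : ∀ y, c y ≠ y := by
        intro y hfix
        obtain ⟨i, hi⟩ := (hc y).symm
        rw [Equiv.Perm.zpow_apply_eq_self_of_apply_eq_self hfix] at hi
        rw [hi] at hfix
        exact hb hfix
      refine ⟨⟨b, hb, fun y _ => hc y⟩, Finset.eq_univ_iff_forall.mpr fun y =>
        Equiv.Perm.mem_support.mpr (hmove y)⟩
    have horder : orderOf c ∣ m + 1 := by
      rcases Nat.eq_zero_or_pos m with hm | hm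
      · rw [hc1 hm, orderOf_one]; exact one_dvd _
      · obtain ⟨hcyc', hsupp⟩ := hcyc hm
        rw [hcyc'.orderOf, hsupp, Finset.card_univ, h]
    have hpow : c ^ (m+1) = 1 := orderOf_dvd_iff_pow_eq_one.mp horder
    -- the candidate function
    set F : Fin (m+1) → β := fun i => (c ^ (i.val)) b with hF
    have hFsurj : Function.Surjective F := by
      intro y
      obtain ⟨i, hilt, hi⟩ := Equiv.Perm.SameCycle.exists_pow_eq' (hc y)
      have hile : i % (m+1) = i ∨ c ^ (i % (m+1)) = c ^ i := by
        right
        conv_rhs => rw [← Nat.mod_add_div i (m+1)]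
        rw [pow_add, pow_mul, hpow, one_pow, mul_one]
      refine ⟨⟨i % (m+1), Nat.mod_lt _ (Nat.succ_pos m)⟩, ?_⟩
      rcases hile with h' | h'
      · simp only [hF, h']; exact hi
      · simp only [hF]; rw [h']; exact hi
    have hFbij : Function.Bijective F :=
      (Fintype.bijective_iff_surjective_and_card F).mpr ⟨hFsurj, by simp [h]⟩
    set f : Fin (m+1) ≃ β := Equiv.ofBijective F hFbij with hf
    have hf0 : f 0 = b := by simp [hf, hF, Equiv.ofBijective_apply]
    refine ⟨⟨f, hf0⟩, ?_⟩
    apply Subtype.ext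
    apply Equiv.ext
    intro y
    obtain ⟨i, rfl⟩ := f.surjective y
    show (Equiv.permCongr f (finRotate (m+1))) (f i) = c (f i)
    rw [Equiv.permCongr_apply, Equiv.symm_apply_apply, finRotate_succ_apply]
    have hfap : ∀ j : Fin (m+1), f j = (c ^ (j.val)) b := fun j => rfl
    rw [hfap, hfap]
    rcases Nat.lt_or_ge (i.val + 1) (m + 1) with hlt | hge
    · have hv : ((i + 1 : Fin (m+1))).val = i.val + 1 :=
        Fin.val_add_one_of_lt (by rw [Fin.lt_def]; simp only [Fin.val_last]; omega)
      rw [hv, _root_.pow_succ', Equiv.Perm.mul_apply]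
    · have hi : i.val = m := by omega
      have : ((i + 1 : Fin (m+1))).val = 0 := by
        rw [Fin.val_add_one]
        split
        · rfl
        · exfalso; rename_i hlast; exact hlast (by ext; simp [hi])
      rw [this]
      show b = c ((c ^ i.val) b)
      rw [← Equiv.Perm.mul_apply, hi, ← _root_.pow_succ', hpow]
      rfl
  exact (Fintype.card_of_bijective ⟨hinj, hsurj⟩).symm



lemma subtypeCongr_eq_extendDomain (p : α → Prop) [DecidablePred p]
    (c : Equiv.Perm {x // p x}) :
    c.subtypeCongr (1 : Equiv.Perm {x // ¬ p x}) = c.extendDomain (Equiv.refl (Subtype p)) := by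
  ext x
  by_cases h : p x
  · rw [Equiv.Perm.subtypeCongr.left_apply _ _ h,
      Equiv.Perm.extendDomain_apply_subtype _ _ h]
    rfl
  · rw [Equiv.Perm.subtypeCongr.right_apply _ _ h,
      Equiv.Perm.extendDomain_apply_not_subtype _ _ h]
    rfl

lemma subtypeCongr_eq_extendDomain' (p : α → Prop) [DecidablePred p]
    (d : Equiv.Perm {x // ¬ p x}) :
    Equiv.Perm.subtypeCongr (1 : Equiv.Perm {x // p x}) d
      = d.extendDomain (Equiv.refl (Subtype fun x => ¬ p x)) := by
  ext x
  by_cases h : p x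
  · rw [Equiv.Perm.subtypeCongr.left_apply _ _ h]
    exact (Equiv.Perm.extendDomain_apply_not_subtype (p := fun a => ¬ p a) d
      (Equiv.refl _) (not_not_intro h)).symm
  · rw [Equiv.Perm.subtypeCongr.right_apply _ _ h]
    exact (Equiv.Perm.extendDomain_apply_subtype (p := fun a => ¬ p a) d
      (Equiv.refl _) h).symm

lemma cycleType_subtypeCongr (p : α → Prop) [DecidablePred p]
    (c : Equiv.Perm {x // p x}) (d : Equiv.Perm {x // ¬ p x}) :
    (c.subtypeCongr d).cycleType = c.cycleType + d.cycleType := by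
  have hsplit : c.subtypeCongr d
      = (c.subtypeCongr (1 : Equiv.Perm {x // ¬ p x}))
        * (Equiv.Perm.subtypeCongr (1 : Equiv.Perm {x // p x}) d) := by
    ext x
    by_cases h : p x
    · rw [Equiv.Perm.subtypeCongr.left_apply _ _ h, Equiv.Perm.mul_apply,
        Equiv.Perm.subtypeCongr.left_apply _ _ h]
      exact (Equiv.Perm.subtypeCongr.left_apply c 1 h).symm
    · rw [Equiv.Perm.subtypeCongr.right_apply _ _ h, Equiv.Perm.mul_apply,
        Equiv.Perm.subtypeCongr.right_apply _ _ h]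
      exact (Equiv.Perm.subtypeCongr.right_apply c 1 (d ⟨x, h⟩).2).symm
  have hdisj : Equiv.Perm.Disjoint (c.subtypeCongr (1 : Equiv.Perm {x // ¬ p x}))
      (Equiv.Perm.subtypeCongr (1 : Equiv.Perm {x // p x}) d) := by
    intro x
    by_cases h : p x
    · right; rw [Equiv.Perm.subtypeCongr.left_apply _ _ h]; rfl
    · left; rw [Equiv.Perm.subtypeCongr.right_apply _ _ h]; rfl
  rw [hsplit, hdisj.cycleType_mul, subtypeCongr_eq_extendDomain, subtypeCongr_eq_extendDomain',
    Equiv.Perm.cycleType_extendDomain, Equiv.Perm.cycleType_extendDomain]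

lemma cycleType_permCongr {β : Type*} [Fintype β] [DecidableEq β]
    (e : α ≃ β) (d : Equiv.Perm α) :
    (e.permCongr d).cycleType = d.cycleType := by
  have h : e.permCongr d
      = d.extendDomain (e.trans (Equiv.subtypeUnivEquiv (fun _ : β => trivial)).symm) := by
    ext x
    rw [Equiv.permCongr_apply,
      Equiv.Perm.extendDomain_apply_subtype _ _ (trivial : (fun _ : β => True) x)]
    rfl
  rw [h, Equiv.Perm.cycleType_extendDomain]

lemma cycleType_of_fullorbit {β : Type*} [Fintype β] [DecidableEq β] (b : β)
    (c : Equiv.Perm β) (hc : ∀ y, c.SameCycle b y) :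
    c.cycleType = if Fintype.card β = 1 then 0 else {Fintype.card β} := by
  split
  · rename_i h1
    have : Subsingleton β := Fintype.card_le_one_iff_subsingleton.mp (by omega)
    have : c = 1 := Equiv.ext fun x => Subsingleton.elim _ _
    rw [this, Equiv.Perm.cycleType_one]
  · rename_i h1
    have hcb : 1 < Fintype.card β := by
      have : 0 < Fintype.card β := Fintype.card_pos_iff.mpr ⟨b⟩
      omega
    have hb : c b ≠ b := by
      intro hfix
      obtain ⟨y, hy⟩ := Fintype.exists_ne_of_one_lt_card hcb b
      obtain ⟨i, hi⟩ := hc y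
      rw [Equiv.Perm.zpow_apply_eq_self_of_apply_eq_self hfix] at hi
      exact hy hi.symm
    have hmove : ∀ y, c y ≠ y := by
      intro y hfix
      obtain ⟨i, hi⟩ := (hc y).symm
      rw [Equiv.Perm.zpow_apply_eq_self_of_apply_eq_self hfix] at hi
      rw [hi] at hfix
      exact hb hfix
    have hcyc : c.IsCycle := ⟨b, hb, fun y _ => hc y⟩
    have hsupp : c.support = Finset.univ :=
      Finset.eq_univ_iff_forall.mpr fun y => Equiv.Perm.mem_support.mpr (hmove y)
    rw [hcyc.cycleType, hsupp, Finset.card_univ]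



lemma subtypeCongr_zpow (p : α → Prop) [DecidablePred p]
    (c : Equiv.Perm {x // p x}) (d : Equiv.Perm {x // ¬ p x}) (i : ℤ) :
    (c.subtypeCongr d) ^ i = (c ^ i).subtypeCongr (d ^ i) := by
  have h1 : c.subtypeCongr d = Equiv.Perm.subtypeCongrHom p (c, d) := rfl
  have h2 : (c ^ i).subtypeCongr (d ^ i) = Equiv.Perm.subtypeCongrHom p ((c, d) ^ i) := rfl
  rw [h1, h2, map_zpow]

noncomputable def orbitFiberEquiv {α : Type*} [Fintype α] [DecidableEq α] (z : α) (s : Finset α) (hz : z ∈ s) :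
    {σ : Equiv.Perm α // ∀ x, σ.SameCycle z x ↔ x ∈ s} ≃
      {c : Equiv.Perm {x // x ∈ s} // ∀ y, c.SameCycle ⟨z, hz⟩ y}
        × Equiv.Perm {x : α // ¬ x ∈ s} where
  toFun := fun ⟨σ, hσ⟩ =>
    have hinv : ∀ x, x ∈ s ↔ σ x ∈ s := fun x => by
      rw [← hσ, ← hσ, Equiv.Perm.sameCycle_apply_right]
    ⟨⟨σ.subtypePerm (fun x => (hinv x).symm), by
        rintro ⟨y, hy⟩
        obtain ⟨i, hi⟩ := (hσ y).mpr hy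
        exact ⟨i, by
          rw [Equiv.Perm.subtypePerm_zpow]
          exact Subtype.ext hi⟩⟩,
      σ.subtypePerm (fun x => not_congr (hinv x).symm)⟩
  invFun := fun ⟨⟨c, hc⟩, d⟩ =>
    ⟨c.subtypeCongr d, by
      intro x
      constructor
      · rintro ⟨i, hi⟩
        rw [subtypeCongr_zpow] at hi
        rw [← hi, Equiv.Perm.subtypeCongr.left_apply _ _ hz]
        exact ((c ^ i) ⟨z, hz⟩).2
      · intro hx
        obtain ⟨i, hi⟩ := hc ⟨x, hx⟩
        refine ⟨i, ?_⟩
        rw [subtypeCongr_zpow, Equiv.Perm.subtypeCongr.left_apply _ _ hz, hi]⟩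
  left_inv := fun ⟨σ, hσ⟩ => by
    apply Subtype.ext
    ext x
    by_cases h : x ∈ s
    · rw [Equiv.Perm.subtypeCongr.left_apply _ _ h]
      rfl
    · rw [Equiv.Perm.subtypeCongr.right_apply _ _ h]
      rfl
  right_inv := fun ⟨⟨c, hc⟩, d⟩ => by
    refine Prod.ext (Subtype.ext ?_) ?_
    · ext ⟨x, hx⟩
      exact Equiv.Perm.subtypeCongr.left_apply _ _ hx
    · ext ⟨x, hx⟩
      exact Equiv.Perm.subtypeCongr.right_apply _ _ hx

lemma wtA_cons (a : ℕ → ℂ) (m : ℕ) (μ : Multiset ℕ) : wtA a (m ::ₘ μ) = a m * wtA a μ := by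
  simp [wtA]

lemma fullCycleType_cons {K M m : ℕ} (σ : Equiv.Perm (Fin K)) (τ : Equiv.Perm (Fin M))
    (hm : 1 ≤ m) (hM : M + m = K)
    (hct : σ.cycleType = (if m = 1 then 0 else {m}) + τ.cycleType) :
    fullCycleType σ = m ::ₘ fullCycleType τ := by
  have hτ : τ.cycleType.sum ≤ M := cycleType_sum_le τ
  by_cases h1 : m = 1
  · subst h1
    rw [if_pos rfl, zero_add] at hct
    rw [fullCycleType, fullCycleType, hct]
    have h2 : K - τ.cycleType.sum = (M - τ.cycleType.sum) + 1 := by omega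
    rw [h2, Multiset.replicate_succ, Multiset.add_cons]
  · rw [if_neg h1, Multiset.singleton_add] at hct
    rw [fullCycleType, fullCycleType, hct, Multiset.sum_cons]
    have h2 : K - (m + τ.cycleType.sum) = M - τ.cycleType.sum := by omega
    rw [h2, Multiset.cons_add]

lemma card_filter_zero_mem_card (n m : ℕ) (hm : 1 ≤ m) :
    (Finset.univ.filter (fun s : Finset (Fin (n+1)) =>
      (0 : Fin (n+1)) ∈ s ∧ s.card = m)).card = n.choose (m-1) := by
  have h1 : (Finset.univ.erase (0 : Fin (n+1))).card = n := by
    rw [Finset.card_erase_of_mem (Finset.mem_univ _), Finset.card_univ, Fintype.card_fin]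
    omega
  have key : (Finset.univ.filter (fun s : Finset (Fin (n+1)) =>
      (0 : Fin (n+1)) ∈ s ∧ s.card = m)).card
      = (Finset.powersetCard (m-1) (Finset.univ.erase (0 : Fin (n+1)))).card := by
    refine Finset.card_bij' (fun s _ => s.erase 0) (fun t _ => insert 0 t) ?_ ?_ ?_ ?_
    · intro s hs
      rw [Finset.mem_filter] at hs
      rw [Finset.mem_powersetCard]
      exact ⟨Finset.erase_subset_erase _ (Finset.subset_univ s),
        by rw [Finset.card_erase_of_mem hs.2.1, hs.2.2]⟩
    · intro t ht
      rw [Finset.mem_powersetCard] at ht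
      have h0t : (0 : Fin (n+1)) ∉ t := fun h =>
        (Finset.notMem_erase _ _) (ht.1 h)
      rw [Finset.mem_filter]
      refine ⟨Finset.mem_univ _, Finset.mem_insert_self _ _, ?_⟩
      rw [Finset.card_insert_of_notMem h0t, ht.2]
      omega
    · intro s hs
      rw [Finset.mem_filter] at hs
      exact Finset.insert_erase hs.2.1
    · intro t ht
      rw [Finset.mem_powersetCard] at ht
      exact Finset.erase_insert (fun h => (Finset.notMem_erase _ _) (ht.1 h))
  rw [key, Finset.card_powersetCard, h1]

lemma SA_rec (a : ℕ → ℂ) (n : ℕ) :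
    SA a (n+1) = ∑ m ∈ Finset.Icc 1 (n+1),
      ((n.choose (m-1) * (m-1)! : ℕ) : ℂ) * (a m * SA a (n+1-m)) := by
  classical
  have stepA : SA a (n+1) = ∑ s : Finset (Fin (n+1)),
      ∑ σ ∈ Finset.univ.filter (fun σ : Equiv.Perm (Fin (n+1)) =>
        Finset.univ.filter (fun x => σ.SameCycle 0 x) = s), wtA a (fullCycleType σ) := by
    rw [SA]
    exact (Finset.sum_fiberwise _ _ _).symm
  have stepB : ∀ s : Finset (Fin (n+1)),
      (∑ σ ∈ Finset.univ.filter (fun σ : Equiv.Perm (Fin (n+1)) =>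
        Finset.univ.filter (fun x => σ.SameCycle 0 x) = s), wtA a (fullCycleType σ))
      = if (0 : Fin (n+1)) ∈ s then
          (((s.card - 1)! : ℕ) : ℂ) * (a s.card * SA a (n+1 - s.card)) else 0 := by
    intro s
    by_cases h0 : (0 : Fin (n+1)) ∈ s
    · rw [if_pos h0]
      have hm1 : 1 ≤ s.card := Finset.card_pos.mpr ⟨0, h0⟩
      have hmn : s.card ≤ n + 1 := by
        simpa using Finset.card_le_univ s
      have hcardcoe : Fintype.card {x : Fin (n+1) // x ∈ s} = s.card := Fintype.card_coe s
      have hcompl : Fintype.card {x : Fin (n+1) // ¬ x ∈ s} = n + 1 - s.card := by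
        rw [Fintype.card_subtype_compl, Fintype.card_fin, hcardcoe]
      set ecompl : {x : Fin (n+1) // ¬ x ∈ s} ≃ Fin (n + 1 - s.card) :=
        Fintype.equivFinOfCardEq hcompl with hecompl
      have hchar : ∀ σ : Equiv.Perm (Fin (n+1)),
          σ ∈ Finset.univ.filter (fun σ : Equiv.Perm (Fin (n+1)) =>
            Finset.univ.filter (fun x => σ.SameCycle 0 x) = s)
          ↔ (∀ x, σ.SameCycle 0 x ↔ x ∈ s) := by
        intro σ
        rw [Finset.mem_filter]
        simp only [Finset.mem_univ, true_and]
        rw [Finset.ext_iff]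
        constructor
        · intro h x; rw [← h x]; simp
        · intro h x; rw [Finset.mem_filter]; simp [h x]
      rw [Finset.sum_subtype _ hchar (fun σ => wtA a (fullCycleType σ))]
      rw [← Equiv.sum_comp (orbitFiberEquiv (0 : Fin (n+1)) s h0).symm
        (fun σ : {σ : Equiv.Perm (Fin (n+1)) // ∀ x, σ.SameCycle 0 x ↔ x ∈ s} =>
          wtA a (fullCycleType σ.1))]
      have hval : ∀ cd : {c : Equiv.Perm {x : Fin (n+1) // x ∈ s} //
            ∀ y, c.SameCycle ⟨0, h0⟩ y} × Equiv.Perm {x : Fin (n+1) // ¬ x ∈ s},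
          ((orbitFiberEquiv (0 : Fin (n+1)) s h0).symm cd).1
            = Equiv.Perm.subtypeCongr cd.1.1 cd.2 := fun ⟨⟨c, hc⟩, d⟩ => rfl
      have hwt : ∀ (c : {c : Equiv.Perm {x : Fin (n+1) // x ∈ s} //
            ∀ y, c.SameCycle ⟨0, h0⟩ y}) (d : Equiv.Perm {x : Fin (n+1) // ¬ x ∈ s}),
          wtA a (fullCycleType (Equiv.Perm.subtypeCongr c.1 d))
            = a s.card * wtA a (fullCycleType (ecompl.permCongr d)) := by
        intro c d
        have hct : (Equiv.Perm.subtypeCongr c.1 d).cycleType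
            = (if s.card = 1 then (0 : Multiset ℕ) else {s.card})
              + (ecompl.permCongr d).cycleType := by
          rw [cycleType_subtypeCongr, cycleType_permCongr ecompl d]
          congr 1
          have h2 := cycleType_of_fullorbit ⟨0, h0⟩ c.1 c.2
          convert h2 using 2 <;> rw [hcardcoe]
        rw [fullCycleType_cons (m := s.card) _ (ecompl.permCongr d) hm1 (by omega) hct, wtA_cons]
      calc (∑ cd : {c : Equiv.Perm {x : Fin (n+1) // x ∈ s} //
            ∀ y, c.SameCycle ⟨0, h0⟩ y} × Equiv.Perm {x : Fin (n+1) // ¬ x ∈ s},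
            wtA a (fullCycleType (((orbitFiberEquiv (0 : Fin (n+1)) s h0).symm cd)).1))
          = ∑ cd : {c : Equiv.Perm {x : Fin (n+1) // x ∈ s} //
            ∀ y, c.SameCycle ⟨0, h0⟩ y} × Equiv.Perm {x : Fin (n+1) // ¬ x ∈ s},
            a s.card * wtA a (fullCycleType (ecompl.permCongr cd.2)) := by
            refine Finset.sum_congr rfl fun cd _ => ?_
            rw [hval cd, hwt cd.1 cd.2]
        _ = ∑ c : {c : Equiv.Perm {x : Fin (n+1) // x ∈ s} // ∀ y, c.SameCycle ⟨0, h0⟩ y},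
            ∑ d : Equiv.Perm {x : Fin (n+1) // ¬ x ∈ s},
              a s.card * wtA a (fullCycleType (ecompl.permCongr d)) := by
            rw [Fintype.sum_prod_type]
        _ = (((s.card - 1)! : ℕ) : ℂ) * (a s.card * SA a (n+1 - s.card)) := by
            rw [Finset.sum_const, Finset.card_univ]
            have hcard2 : Fintype.card {c : Equiv.Perm {x : Fin (n+1) // x ∈ s} //
                ∀ y, c.SameCycle ⟨0, h0⟩ y} = (s.card - 1)! := by
              have h4 := card_fullorbit (β := {x : Fin (n+1) // x ∈ s}) (s.card - 1)
                (by rw [hcardcoe]; omega) ⟨0, h0⟩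
              convert h4 using 2
            rw [hcard2, nsmul_eq_mul]
            congr 1
            rw [← Finset.mul_sum]
            congr 1
            rw [SA]
            exact Fintype.sum_equiv (Equiv.permCongr ecompl) _ _ (fun d => rfl)
    · rw [if_neg h0]
      apply Finset.sum_eq_zero
      intro σ hσ
      exfalso
      rw [Finset.mem_filter] at hσ
      apply h0
      rw [← hσ.2, Finset.mem_filter]
      exact ⟨Finset.mem_univ _, Equiv.Perm.SameCycle.refl σ 0⟩
  rw [stepA, Finset.sum_congr rfl (fun s _ => stepB s), ← Finset.sum_filter]
  have hmaps : ∀ s ∈ Finset.univ.filter (fun s : Finset (Fin (n+1)) => (0 : Fin (n+1)) ∈ s),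
      s.card ∈ Finset.Icc 1 (n+1) := by
    intro s hs
    rw [Finset.mem_filter] at hs
    rw [Finset.mem_Icc]
    exact ⟨Finset.card_pos.mpr ⟨0, hs.2⟩, by simpa using Finset.card_le_univ s⟩
  rw [← Finset.sum_fiberwise_of_maps_to hmaps]
  refine Finset.sum_congr rfl fun m hm => ?_
  rw [Finset.mem_Icc] at hm
  calc (∑ s ∈ (Finset.univ.filter (fun s : Finset (Fin (n+1)) => (0 : Fin (n+1)) ∈ s)).filter
        (fun s => s.card = m), (((s.card - 1)! : ℕ) : ℂ) * (a s.card * SA a (n+1 - s.card)))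
      = ∑ s ∈ (Finset.univ.filter (fun s : Finset (Fin (n+1)) => (0 : Fin (n+1)) ∈ s)).filter
        (fun s => s.card = m), (((m - 1)! : ℕ) : ℂ) * (a m * SA a (n+1 - m)) := by
        refine Finset.sum_congr rfl fun s hs => ?_
        rw [(Finset.mem_filter.mp hs).2]
    _ = ((n.choose (m-1) * (m-1)! : ℕ) : ℂ) * (a m * SA a (n+1-m)) := by
        rw [Finset.sum_const, Finset.filter_filter]
        have : (Finset.univ.filter fun s : Finset (Fin (n+1)) =>
            (0 : Fin (n+1)) ∈ s ∧ s.card = m).card = n.choose (m-1) :=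
          card_filter_zero_mem_card n m hm.1
        rw [this, nsmul_eq_mul]
        push_cast
        ring

lemma SA_eq (a : ℕ → ℂ) : ∀ n, SA a n = (n ! : ℂ) * cA a n := by
  intro n
  induction n using Nat.strong_induction_on with
  | _ n ih =>
    match n with
    | 0 => rw [SA_zero, cA_zero]; simp
    | (n+1) =>
      rw [SA_rec]
      have key : ∀ m ∈ Finset.Icc 1 (n+1),
          ((n.choose (m-1) * (m-1)! : ℕ) : ℂ) * (a m * SA a (n+1-m))
          = ((n ! : ℕ) : ℂ) * (a m * cA a (n+1-m)) := by
        intro m hm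
        rw [Finset.mem_Icc] at hm
        rw [ih (n+1-m) (by omega)]
        have hfact : (n.choose (m-1) * (m-1)! * (n+1-m)! : ℕ) = n ! := by
          have h1 : m - 1 ≤ n := by omega
          have h3 := Nat.choose_mul_factorial_mul_factorial h1
          have h2 : n - (m-1) = n+1-m := by omega
          rw [h2] at h3
          exact h3
        calc ((n.choose (m-1) * (m-1)! : ℕ) : ℂ) * (a m * (((n+1-m)! : ℂ) * cA a (n+1-m)))
            = ((n.choose (m-1) * (m-1)! * (n+1-m)! : ℕ) : ℂ) * (a m * cA a (n+1-m)) := by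
              push_cast; ring
          _ = ((n ! : ℕ) : ℂ) * (a m * cA a (n+1-m)) := by rw [hfact]
      rw [Finset.sum_congr rfl key, ← Finset.mul_sum, ← cA_rec, Nat.factorial_succ]
      push_cast
      ring

end Aux

/-- The cycle index theorem, stated coefficientwise:
`∑_{σ ∈ S_n} ∏_m a_m^{C_m(σ)} = n! [t^n] exp(∑_{m ≥ 1} (a_m/m) t^m)`, where the
`n`-th coefficient of the exponential of a series `g` with zero constant term is
the `n`-th coefficient of `∑_{k=0}^n g^k / k!`. -/
theorem cycle_index_theorem (a : ℕ → ℂ) (n : ℕ) :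
    ∑ σ : Equiv.Perm (Fin n), ∏ m ∈ Finset.Icc 1 n, a m ^ cycleCount σ m =
      (n ! : ℂ) *
        PowerSeries.coeff (R := ℂ) n
          (∑ k ∈ Finset.range (n + 1),
            ((k ! : ℂ))⁻¹ • (PowerSeries.mk fun m => if m = 0 then 0 else a m / m) ^ k) := by
  rw [← SA_def', SA_eq]
  rfl
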